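/- Let A be a real m×n matrix whose rows a_1,…,a_m are all nonzero, and let σ ≥ 0 satisfy σ‖y‖ ≤ ‖Ay‖ for all y ∈ ℝ^n (i.e., σ is a lower bound on the smallest singular value of A). Let x* ∈ ℝ^n and b := Ax*. For x ∈ ℝ^n and each i, let x^{(i)} := x − ((⟨a_i, x⟩ − b_i)/‖a_i‖²) a_i. Then the one-step expected squared error under RK sampling contracts: ∑_{i=1}^m (‖a_i‖²/‖A‖_F²) ‖x^{(i)} − x*‖² ≤ (1 − σ²/‖A‖_F²) ‖x − x*‖². -/

import Mathlib

open scoped RealInnerProductSpace Matrix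

/-- The `i`-th row of a matrix, viewed as a vector of Euclidean space. -/
def Matrix.rowE {m n : ℕ} (A : Matrix (Fin m) (Fin n) ℝ) (i : Fin m) :
    EuclideanSpace ℝ (Fin n) := WithLp.toLp 2 (A i)

/-- A vector of `ℝ^m`, viewed as a vector of Euclidean space. -/
def vecEuclidean {m : ℕ} (y : Fin m → ℝ) : EuclideanSpace ℝ (Fin m) := WithLp.toLp 2 y

/-- For a consistent system `b = A x*` with all rows `a_i` nonzero, and
`σ ≥ 0` with `σ‖y‖ ≤ ‖Ay‖` for all `y` (a lower bound on the smallest singular value),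
the one-step expected squared error under RK sampling contracts:
`∑ i (‖a_i‖²/‖A‖_F²) ‖x^{(i)} - x*‖² ≤ (1 - σ²/‖A‖_F²) ‖x - x*‖²`. -/
theorem rk_one_step_expected_contraction
    {m n : ℕ} (A : Matrix (Fin m) (Fin n) ℝ)
    (hrows : ∀ i, A.rowE i ≠ 0)
    (σ : ℝ) (hσ : 0 ≤ σ)
    (hσA : ∀ y : EuclideanSpace ℝ (Fin n), σ * ‖y‖ ≤ ‖vecEuclidean (A.mulVec y)‖)
    (xstar : EuclideanSpace ℝ (Fin n)) (b : Fin m → ℝ) (hb : b = A.mulVec xstar)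
    (x : EuclideanSpace ℝ (Fin n))
    (xi : Fin m → EuclideanSpace ℝ (Fin n))
    (hxi : ∀ i, xi i = x - ((⟪A.rowE i, x⟫ - b i) / ‖A.rowE i‖ ^ 2) • A.rowE i) :
    ∑ i, (‖A.rowE i‖ ^ 2 / ∑ l, ‖A.rowE l‖ ^ 2) * ‖xi i - xstar‖ ^ 2
      ≤ (1 - σ ^ 2 / ∑ l, ‖A.rowE l‖ ^ 2) * ‖x - xstar‖ ^ 2 := by
  set e : EuclideanSpace ℝ (Fin n) := x - xstar with he
  set F : ℝ := ∑ l, ‖A.rowE l‖ ^ 2 with hF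
  -- b i = ⟪a_i, xstar⟫
  have hb' : ∀ i, b i = ⟪A.rowE i, xstar⟫ := by
    intro i
    simp [hb, Matrix.mulVec, dotProduct, PiLp.inner_apply, Matrix.rowE,
      RCLike.inner_apply, conj_trivial, mul_comm]
  have hc : ∀ i, ⟪A.rowE i, x⟫ - b i = ⟪A.rowE i, e⟫ := by
    intro i
    rw [hb' i, he, inner_sub_right]
  -- per-term norm identity
  have hterm : ∀ i, ‖xi i - xstar‖ ^ 2 = ‖e‖ ^ 2 - ⟪A.rowE i, e⟫ ^ 2 / ‖A.rowE i‖ ^ 2 := by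
    intro i
    have hna : ‖A.rowE i‖ ≠ 0 := norm_ne_zero_iff.mpr (hrows i)
    have hna2 : (‖A.rowE i‖ : ℝ) ^ 2 ≠ 0 := pow_ne_zero 2 hna
    have hxe : xi i - xstar = e - (⟪A.rowE i, e⟫ / ‖A.rowE i‖ ^ 2) • A.rowE i := by
      rw [hxi i, hc i, sub_right_comm]
    have hce : (inner ℝ e (A.rowE i) : ℝ) = ⟪A.rowE i, e⟫ := real_inner_comm _ _
    rw [hxe, norm_sub_sq_real, real_inner_smul_right, norm_smul, mul_pow,
      Real.norm_eq_abs, sq_abs, hce]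
    field_simp
    ring
  rcases eq_or_lt_of_le (by positivity : (0:ℝ) ≤ F) with hF0 | hFpos
  · -- F = 0 forces all rows zero, contradiction unless m = 0
    have hm : ∀ i : Fin m, False := by
      intro i
      have : ‖A.rowE i‖ ^ 2 = 0 := by
        have := Finset.sum_eq_zero_iff_of_nonneg (fun l _ => by positivity) |>.mp hF0.symm
        exact this i (Finset.mem_univ i)
      exact hrows i (norm_eq_zero.mp (by nlinarith [norm_nonneg (A.rowE i)]))
    have hLHS : ∑ i, (‖A.rowE i‖ ^ 2 / F) * ‖xi i - xstar‖ ^ 2 = 0 :=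
      Finset.sum_eq_zero fun i _ => absurd trivial (fun _ => hm i)
    rw [hLHS, ← hF0]
    have : (1 - σ ^ 2 / (0:ℝ)) = 1 := by simp
    rw [this, one_mul]
    positivity
  · -- main case
    have hFne : F ≠ 0 := ne_of_gt hFpos
    -- sum of squares of inner products = ‖A e‖²
    have hAe : ∑ i, ⟪A.rowE i, e⟫ ^ 2 = ‖vecEuclidean (A.mulVec e)‖ ^ 2 := by
      rw [EuclideanSpace.norm_sq_eq]
      simp [vecEuclidean, PiLp.inner_apply, RCLike.inner_apply, conj_trivial,
        Matrix.mulVec, dotProduct, Matrix.rowE, sq, mul_comm]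
    have hAeσ : σ ^ 2 * ‖e‖ ^ 2 ≤ ∑ i, ⟪A.rowE i, e⟫ ^ 2 := by
      rw [hAe]
      have h := hσA e
      nlinarith [norm_nonneg e, norm_nonneg (vecEuclidean (A.mulVec e)), mul_nonneg hσ (norm_nonneg e)]
    have hsum : ∑ i, (‖A.rowE i‖ ^ 2 / F) * ‖xi i - xstar‖ ^ 2
        = ‖e‖ ^ 2 - (∑ i, ⟪A.rowE i, e⟫ ^ 2) / F := by
      have : ∀ i ∈ Finset.univ, (‖A.rowE i‖ ^ 2 / F) * ‖xi i - xstar‖ ^ 2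
          = (‖A.rowE i‖ ^ 2 * ‖e‖ ^ 2 - ⟪A.rowE i, e⟫ ^ 2) / F := by
        intro i _
        have hna2 : (‖A.rowE i‖ : ℝ) ^ 2 ≠ 0 :=
          pow_ne_zero 2 (norm_ne_zero_iff.mpr (hrows i))
        have hna : ‖A.rowE i‖ ≠ 0 := norm_ne_zero_iff.mpr (hrows i)
        rw [hterm i]
        field_simp
      rw [Finset.sum_congr rfl this, ← Finset.sum_div, Finset.sum_sub_distrib,
        ← Finset.sum_mul, ← hF]
      field_simp
    rw [hsum]
    have : (1 - σ ^ 2 / F) * ‖x - xstar‖ ^ 2 = ‖e‖ ^ 2 - (σ ^ 2 * ‖e‖ ^ 2) / F := by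
      rw [← he]; ring
    rw [this]
    have hd : σ ^ 2 * ‖e‖ ^ 2 / F ≤ (∑ i, ⟪A.rowE i, e⟫ ^ 2) / F :=
      div_le_div_of_nonneg_right hAeσ hFpos.le
    linarith
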